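/- (Fluid nonabandoning queue-length formula.) Let ϑ ∈ I, let ζ be the unique fluid model solution with initial measure ϑ, let w be the unique workload fluid model solution with w(0) = w_ϑ, define τ(t) = inf{s ∈ [0,t] : w(s) + s ≥ t}, and let U = {(a,p) ∈ [0,∞)² : a < p}. Then for each 1 ≤ k ≤ K: if 0 ≤ t < w(0), then ζ_k(t)(U) = ϑ_k(U_t) + λ_k ∫_0^t G_k(w(v)) dv; and if t ≥ w(0), then ζ_k(t)(U) = λ_k ∫_{τ(t)}^t G_k(w(v)) dv. -/

import Mathlib

open MeasureTheory Set Filter Topology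
open scoped ENNReal

noncomputable section

namespace OverloadedFIFO

/-- The complement `G(x) = Γ((x, ∞))` of the cumulative distribution function of `Γ`. -/
def Gk (Γ : MeasureTheory.Measure ℝ) (x : ℝ) : ℝ := (Γ (Set.Ioi x)).toReal

/-- Model data: `K` job classes with arrival rates `lam`, service rates `mu`, and
deadline (patience) distributions `Γ`, in the overloaded regime `ρ > 1`.  Each `Γ k` is a
Borel probability measure on `[0,∞)` (no mass on negatives), with continuous c.d.f.
(no atoms, in particular `Γ k {0} = 0`) and finite mean. -/
structure Data (K : ℕ) where
  lam : Fin K → ℝ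
  mu : Fin K → ℝ
  Γ : Fin K → MeasureTheory.Measure ℝ
  lam_pos : ∀ k, 0 < lam k
  mu_pos : ∀ k, 0 < mu k
  Γ_prob : ∀ k, MeasureTheory.IsProbabilityMeasure (Γ k)
  Γ_null_neg : ∀ k, Γ k (Set.Iio 0) = 0
  Γ_noAtom : ∀ k, ∀ x : ℝ, Γ k {x} = 0
  Γ_finite_mean : ∀ k, MeasureTheory.Integrable id (Γ k)
  rho_gt_one : 1 < ∑ k, lam k / mu k

instance {K : ℕ} (D : Data K) (k : Fin K) : IsProbabilityMeasure (D.Γ k) := D.Γ_prob k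

/-- `ρ_k = λ_k / μ_k`. -/
def Data.rho {K : ℕ} (D : Data K) (k : Fin K) : ℝ := D.lam k / D.mu k

/-- `ρ = Σ_k ρ_k`. -/
def Data.rhoTot {K : ℕ} (D : Data K) : ℝ := ∑ k, D.rho k

/-- A workload fluid model solution: a nonnegative function `w` on `[0,∞)` satisfying
`w(t) = w(0) + Σ_k ρ_k ∫_0^t G_k(w(s)) ds − t` for all `t ≥ 0`. -/
def IsWorkloadSol {K : ℕ} (D : Data K) (w : ℝ → ℝ) : Prop :=
  (∀ t : ℝ, 0 ≤ t → 0 ≤ w t) ∧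
  (∀ k : Fin K, ∀ t : ℝ, 0 ≤ t →
    IntervalIntegrable (fun s => Gk (D.Γ k) (w s)) volume 0 t) ∧
  (∀ t : ℝ, 0 ≤ t →
    w t = w 0 + (∑ k, D.rho k * ∫ s in (0:ℝ)..t, Gk (D.Γ k) (w s)) - t)

/-- `w_l = sup {u ≥ 0 : Σ_k ρ_k G_k(u) > 1}`. -/
def wl {K : ℕ} (D : Data K) : ℝ :=
  sSup {u : ℝ | 0 ≤ u ∧ 1 < ∑ k, D.rho k * Gk (D.Γ k) u}

/-- `w_u = sup {u ≥ 0 : Σ_k ρ_k G_k(u) ≥ 1}`. -/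
def wu {K : ℕ} (D : Data K) : ℝ :=
  sSup {u : ℝ | 0 ≤ u ∧ 1 ≤ ∑ k, D.rho k * Gk (D.Γ k) u}

/-- `d_max = max_k sup {x ≥ 0 : G_k(x) > 0} ∈ (0,∞]`, as an extended nonnegative real. -/
def dmax {K : ℕ} (D : Data K) : ℝ≥0∞ :=
  ⨆ k, sSup (ENNReal.ofReal '' {x : ℝ | 0 ≤ x ∧ 0 < Gk (D.Γ k) x})

/-- `τ(t) = inf {s ∈ [0,t] : w(s) + s ≥ t}`. -/
def tauF (w : ℝ → ℝ) (t : ℝ) : ℝ := sInf {s : ℝ | 0 ≤ s ∧ s ≤ t ∧ t ≤ w s + s}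

/-- The nonnegative quadrant `[0,∞)²`. -/
def Q : Set (ℝ × ℝ) := {p | 0 ≤ p.1 ∧ 0 ≤ p.2}

/-- The shift `B_x = {y ∈ [0,∞)² : y − x ∈ B}` of a set `B ⊆ [0,∞)²`. -/
def shift (B : Set (ℝ × ℝ)) (x : ℝ × ℝ) : Set (ℝ × ℝ) :=
  {y | y ∈ Q ∧ (y.1 - x.1, y.2 - x.2) ∈ B}

/-- Diagonal shift `B_t = B_{(t,t)}`. -/
def shiftd (B : Set (ℝ × ℝ)) (t : ℝ) : Set (ℝ × ℝ) := shift B (t, t)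

/-- The set `C = ([0,∞)×{0}) ∪ ({0}×[0,∞))`. -/
def Cset : Set (ℝ × ℝ) := {p | (0 ≤ p.1 ∧ p.2 = 0) ∨ (p.1 = 0 ∧ 0 ≤ p.2)}

/-- The `κ`-enlargement `B^κ = {x ∈ [0,∞)² : inf_{y ∈ B} ‖x−y‖ < κ}` (Euclidean norm). -/
def enlarge (B : Set (ℝ × ℝ)) (κ : ℝ) : Set (ℝ × ℝ) :=
  {x | x ∈ Q ∧ ∃ y ∈ B, Real.sqrt ((x.1 - y.1) ^ 2 + (x.2 - y.2) ^ 2) < κ}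

/-- `w_ϑ = sup {x ≥ 0 : ϑ_+([x,∞)×[0,∞)) > 0}` for a `K`-tuple `ϑ` of measures on `[0,∞)²`. -/
def wMeas {K : ℕ} (ϑ : Fin K → MeasureTheory.Measure (ℝ × ℝ)) : ℝ :=
  sSup {x : ℝ | 0 ≤ x ∧ 0 < ∑ k, ϑ k (Set.Ici x ×ˢ Set.Ici (0:ℝ))}

/-- Membership in the set `I` of admissible initial measures: each `ϑ k` is a finite Borel
measure on `[0,∞)²`; (I.1) the superposition charges no corner set `C_x`, `x ∈ [0,∞)²`;
(I.2) `w_ϑ < ∞`; (I.3) `max_k G_k(w_ϑ − ε) > 0` for every `ε > 0`. -/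
def MemI {K : ℕ} (D : Data K) (ϑ : Fin K → MeasureTheory.Measure (ℝ × ℝ)) : Prop :=
  (∀ k, IsFiniteMeasure (ϑ k)) ∧
  (∀ k, ϑ k Qᶜ = 0) ∧
  (∀ x ∈ Q, (∑ k, ϑ k (shift Cset x)) = 0) ∧
  BddAbove {x : ℝ | 0 ≤ x ∧ 0 < ∑ k, ϑ k (Set.Ici x ×ˢ Set.Ici (0:ℝ))} ∧
  (∀ ε : ℝ, 0 < ε → ∃ k, 0 < Gk (D.Γ k) (wMeas ϑ - ε))

/-- `δ⁺_w`: the Dirac measure at `w` if `w > 0`, and the zero measure otherwise. -/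
def deltaPlus (w : ℝ) : MeasureTheory.Measure ℝ :=
  if 0 < w then MeasureTheory.Measure.dirac w else 0

instance (w : ℝ) : SFinite (deltaPlus w) := by
  unfold deltaPlus; split_ifs <;> infer_instance

/-- `(δ⁺_w × Γ)(B)`, as a real number. -/
def kern (Γ : MeasureTheory.Measure ℝ) (w : ℝ) (B : Set (ℝ × ℝ)) : ℝ :=
  (((deltaPlus w).prod Γ) B).toReal

/-- A (measure-valued) fluid model solution with initial measure `ϑ`: a family
`ζ(t) = (ζ_1(t),…,ζ_K(t))` of finite Borel measures on `[0,∞)²` with `ζ(0) = ϑ` satisfying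
`ζ_k(t)(B) = ϑ_k(B_t) + λ_k ∫_0^t (δ⁺_{w(s)} × Γ_k)(B_{t−s}) ds` for every Borel
`B ⊆ [0,∞)²` and `t ≥ 0`, where `w` is the (unique) workload fluid model solution with
`w(0) = w_ϑ`. -/
def IsFluidSol {K : ℕ} (D : Data K) (ϑ : Fin K → MeasureTheory.Measure (ℝ × ℝ))
    (ζ : ℝ → Fin K → MeasureTheory.Measure (ℝ × ℝ)) : Prop :=
  ∃ w : ℝ → ℝ, IsWorkloadSol D w ∧ w 0 = wMeas ϑ ∧
    (∀ t : ℝ, 0 ≤ t → ∀ k, IsFiniteMeasure (ζ t k) ∧ ζ t k Qᶜ = 0) ∧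
    (∀ k, ζ 0 k = ϑ k) ∧
    (∀ k, ∀ B : Set (ℝ × ℝ), B ⊆ Q → MeasurableSet B → ∀ t : ℝ, 0 ≤ t →
      IntervalIntegrable (fun s => kern (D.Γ k) (w s) (shiftd B (t - s))) volume 0 t ∧
      ζ t k B = ϑ k (shiftd B t) +
        ENNReal.ofReal (D.lam k * ∫ s in (0:ℝ)..t, kern (D.Γ k) (w s) (shiftd B (t - s))))

/-- The candidate invariant state `θ^w`:
`θ^w_k(B) = λ_k ∫_0^w Γ_k({p ≥ u : (w−u, p−u) ∈ B}) du`. -/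
def thetaW {K : ℕ} (D : Data K) (w : ℝ) (k : Fin K) : MeasureTheory.Measure (ℝ × ℝ) :=
  ENNReal.ofReal (D.lam k) •
    MeasureTheory.Measure.map (fun up : ℝ × ℝ => (w - up.1, up.2 - up.1))
      ((((MeasureTheory.volume.restrict (Set.Ioo (0:ℝ) w))).prod (D.Γ k)).restrict
        {up : ℝ × ℝ | up.1 ≤ up.2})

/- ===== auxiliary lemmas ===== -/

lemma Gk_nonneg (Γ : Measure ℝ) (x : ℝ) : 0 ≤ Gk Γ x := ENNReal.toReal_nonneg

lemma Gk_antitone (Γ : Measure ℝ) [IsFiniteMeasure Γ] : Antitone (Gk Γ) := by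
  intro a b hab
  exact ENNReal.toReal_mono (measure_ne_top _ _) (measure_mono (Ioi_subset_Ioi hab))

lemma rho_nonneg {K : ℕ} (D : Data K) (k : Fin K) : 0 ≤ D.rho k :=
  div_nonneg (D.lam_pos k).le (D.mu_pos k).le

lemma workload_subint {K : ℕ} (D : Data K) {w : ℝ → ℝ} (hw : IsWorkloadSol D w)
    (k : Fin K) {a b : ℝ} (ha : 0 ≤ a) (hb : a ≤ b) :
    IntervalIntegrable (fun s => Gk (D.Γ k) (w s)) volume a b :=
  (hw.2.1 k b (ha.trans hb)).mono_set (by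
    rw [uIcc_of_le hb, uIcc_of_le (ha.trans hb)]
    exact Icc_subset_Icc ha le_rfl)

lemma wadd_mono {K : ℕ} (D : Data K) {w : ℝ → ℝ} (hw : IsWorkloadSol D w)
    {a b : ℝ} (ha : 0 ≤ a) (hab : a ≤ b) : w a + a ≤ w b + b := by
  obtain ⟨hpos, hint, heq⟩ := hw
  have hb : 0 ≤ b := ha.trans hab
  rw [heq a ha, heq b hb]
  have h : ∀ k ∈ Finset.univ, D.rho k * ∫ s in (0:ℝ)..a, Gk (D.Γ k) (w s)
      ≤ D.rho k * ∫ s in (0:ℝ)..b, Gk (D.Γ k) (w s) := by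
    intro k _
    refine mul_le_mul_of_nonneg_left ?_ (rho_nonneg D k)
    have hi1 := hint k a ha
    have hi2 : IntervalIntegrable (fun s => Gk (D.Γ k) (w s)) volume a b :=
      workload_subint D ⟨hpos, hint, heq⟩ k ha hab
    have hsplit := intervalIntegral.integral_add_adjacent_intervals hi1 hi2
    have hnn : 0 ≤ ∫ s in a..b, Gk (D.Γ k) (w s) :=
      intervalIntegral.integral_nonneg hab (fun x _ => Gk_nonneg _ _)
    linarith
  have := Finset.sum_le_sum h
  linarith

lemma workload_continuousOn {K : ℕ} (D : Data K) {w : ℝ → ℝ} (hw : IsWorkloadSol D w)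
    {T : ℝ} (hT : 0 ≤ T) : ContinuousOn w (Icc 0 T) := by
  obtain ⟨hpos, hint, heq⟩ := hw
  have hc : ContinuousOn
      (fun t : ℝ => w 0 + (∑ k, D.rho k * ∫ s in (0:ℝ)..t, Gk (D.Γ k) (w s)) - t)
      (Icc 0 T) := by
    refine (continuousOn_const.add ?_).sub continuousOn_id
    refine continuousOn_finset_sum _ fun k _ => continuousOn_const.mul ?_
    have h := hint k T hT
    rw [intervalIntegrable_iff, uIoc_of_le hT] at h
    have h2 : IntegrableOn (fun s => Gk (D.Γ k) (w s)) (uIcc 0 T) volume := by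
      rw [uIcc_of_le hT, integrableOn_Icc_iff_integrableOn_Ioc]
      exact h
    have := intervalIntegral.continuousOn_primitive_interval h2
    rwa [uIcc_of_le hT] at this
  exact hc.congr (fun t ht => heq t ht.1)

lemma workload_le {K : ℕ} (D : Data K) {w1 w2 : ℝ → ℝ}
    (h1 : IsWorkloadSol D w1) (h2 : IsWorkloadSol D w2) (h0 : w1 0 = w2 0) :
    ∀ t, 0 ≤ t → w1 t ≤ w2 t := by
  by_contra hcon
  push_neg at hcon
  obtain ⟨t0, ht0, hgt⟩ := hcon
  set d : ℝ → ℝ := fun t => w1 t - w2 t with hd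
  have hdt0 : 0 < d t0 := by simp [hd]; linarith
  have hcont : ContinuousOn d (Icc 0 t0) :=
    (workload_continuousOn D h1 ht0).sub (workload_continuousOn D h2 ht0)
  set S : Set ℝ := Icc 0 t0 ∩ d ⁻¹' {0} with hS
  have hSne : (0:ℝ) ∈ S := ⟨⟨le_rfl, ht0⟩, by simp [hd, h0]⟩
  have hSbdd : BddAbove S := ⟨t0, fun s hs => hs.1.2⟩
  have hSclosed : IsClosed S :=
    hcont.preimage_isClosed_of_isClosed isClosed_Icc isClosed_singleton
  set t1 := sSup S with ht1
  have ht1S : t1 ∈ S := hSclosed.csSup_mem ⟨0, hSne⟩ hSbdd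
  have ht1d : d t1 = 0 := ht1S.2
  have ht10 : 0 ≤ t1 := ht1S.1.1
  have ht1t0 : t1 ≤ t0 := ht1S.1.2
  have ht1lt : t1 < t0 := by
    rcases lt_or_eq_of_le ht1t0 with h | h
    · exact h
    · rw [h] at ht1d; simp [hd] at ht1d; linarith
  have hpos : ∀ s, t1 < s → s ≤ t0 → 0 < d s := by
    intro s hs1 hs2
    by_contra hns
    push_neg at hns
    have hs0 : 0 ≤ s := ht10.trans hs1.le
    have hIcc : Icc s t0 ⊆ Icc 0 t0 := Icc_subset_Icc hs0 le_rfl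
    have hmem : (0:ℝ) ∈ Icc (d s) (d t0) := ⟨hns, hdt0.le⟩
    obtain ⟨u, hu, hdu⟩ := intermediate_value_Icc hs2 (hcont.mono hIcc) hmem
    have huS : u ∈ S := ⟨⟨hs0.trans hu.1, hu.2⟩, hdu⟩
    have := le_csSup hSbdd huS
    linarith [hu.1]
  have hle : ∀ k : Fin K, (∫ v in t1..t0, Gk (D.Γ k) (w1 v))
      ≤ ∫ v in t1..t0, Gk (D.Γ k) (w2 v) := by
    intro k
    refine intervalIntegral.integral_mono_on ht1t0
      (workload_subint D h1 k ht10 ht1t0) (workload_subint D h2 k ht10 ht1t0) ?_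
    intro x hx
    rcases eq_or_lt_of_le hx.1 with he | hl
    · rw [← he]
      have hteq : w1 t1 = w2 t1 := by simp [hd] at ht1d; linarith
      rw [hteq]
    · have hx' := hpos x hl hx.2
      simp [hd] at hx'
      exact Gk_antitone _ (by linarith)
  have e1 := h1.2.2 t0 ht0
  have e2 := h2.2.2 t0 ht0
  have e1' := h1.2.2 t1 ht10
  have e2' := h2.2.2 t1 ht10
  have hsplit1 : ∀ k : Fin K, (∫ s in (0:ℝ)..t0, Gk (D.Γ k) (w1 s)) =
      (∫ s in (0:ℝ)..t1, Gk (D.Γ k) (w1 s)) + ∫ s in t1..t0, Gk (D.Γ k) (w1 s) :=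
    fun k => (intervalIntegral.integral_add_adjacent_intervals
      (h1.2.1 k t1 ht10) (workload_subint D h1 k ht10 ht1t0)).symm
  have hsplit2 : ∀ k : Fin K, (∫ s in (0:ℝ)..t0, Gk (D.Γ k) (w2 s)) =
      (∫ s in (0:ℝ)..t1, Gk (D.Γ k) (w2 s)) + ∫ s in t1..t0, Gk (D.Γ k) (w2 s) :=
    fun k => (intervalIntegral.integral_add_adjacent_intervals
      (h2.2.1 k t1 ht10) (workload_subint D h2 k ht10 ht1t0)).symm
  have hsum1 : (∑ k, D.rho k * ∫ s in (0:ℝ)..t0, Gk (D.Γ k) (w1 s)) =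
      (∑ k, D.rho k * ∫ s in (0:ℝ)..t1, Gk (D.Γ k) (w1 s)) +
      ∑ k, D.rho k * ∫ s in t1..t0, Gk (D.Γ k) (w1 s) := by
    rw [← Finset.sum_add_distrib]
    exact Finset.sum_congr rfl fun k _ => by rw [hsplit1 k, mul_add]
  have hsum2 : (∑ k, D.rho k * ∫ s in (0:ℝ)..t0, Gk (D.Γ k) (w2 s)) =
      (∑ k, D.rho k * ∫ s in (0:ℝ)..t1, Gk (D.Γ k) (w2 s)) +
      ∑ k, D.rho k * ∫ s in t1..t0, Gk (D.Γ k) (w2 s) := by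
    rw [← Finset.sum_add_distrib]
    exact Finset.sum_congr rfl fun k _ => by rw [hsplit2 k, mul_add]
  have htail : (∑ k, D.rho k * ∫ s in t1..t0, Gk (D.Γ k) (w1 s)) ≤
      ∑ k, D.rho k * ∫ s in t1..t0, Gk (D.Γ k) (w2 s) :=
    Finset.sum_le_sum fun k _ => mul_le_mul_of_nonneg_left (hle k) (rho_nonneg D k)
  have hd1 : w1 t1 - w2 t1 = 0 := ht1d
  have hd0 : 0 < w1 t0 - w2 t0 := hdt0
  linarith

lemma workload_unique {K : ℕ} (D : Data K) {w1 w2 : ℝ → ℝ}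
    (h1 : IsWorkloadSol D w1) (h2 : IsWorkloadSol D w2) (h0 : w1 0 = w2 0) :
    ∀ t, 0 ≤ t → w1 t = w2 t :=
  fun t ht => le_antisymm (workload_le D h1 h2 h0 t ht) (workload_le D h2 h1 h0.symm t ht)

abbrev Uset : Set (ℝ × ℝ) := {p : ℝ × ℝ | 0 ≤ p.1 ∧ p.1 < p.2}

lemma measurableSet_Uset : MeasurableSet Uset := by
  apply MeasurableSet.inter
  · exact measurableSet_le measurable_const measurable_fst
  · exact measurableSet_lt measurable_fst measurable_snd

lemma measurableSet_shiftd_Uset (r : ℝ) : MeasurableSet (shiftd Uset r) := by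
  have h : shiftd Uset r
      = {y : ℝ × ℝ | (0 ≤ y.1 ∧ 0 ≤ y.2) ∧ 0 ≤ y.1 - r ∧ y.1 - r < y.2 - r} := rfl
  rw [h]
  apply MeasurableSet.inter
  · exact (measurableSet_le measurable_const measurable_fst).inter
      (measurableSet_le measurable_const measurable_snd)
  · exact (measurableSet_le measurable_const (measurable_fst.sub measurable_const)).inter
      (measurableSet_lt (measurable_fst.sub measurable_const)
        (measurable_snd.sub measurable_const))

lemma kern_U_eq (Γ : Measure ℝ) [SFinite Γ] {w' r : ℝ} (h1 : 0 < w') (h2 : r ≤ w') :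
    kern Γ w' (shiftd Uset r) = Gk Γ w' := by
  unfold kern deltaPlus
  rw [if_pos h1, Measure.dirac_prod,
    Measure.map_apply measurable_prodMk_left (measurableSet_shiftd_Uset r)]
  have h : Prod.mk w' ⁻¹' shiftd Uset r = Ioi w' := by
    ext p
    simp only [shiftd, shift, Q, mem_preimage, mem_setOf_eq, mem_Ioi]
    constructor
    · rintro ⟨⟨_, _⟩, _, hlt⟩; linarith
    · intro hp
      exact ⟨⟨h1.le, by linarith⟩, by linarith, by linarith⟩
  rw [h]; rfl

lemma kern_U_zero (Γ : Measure ℝ) [SFinite Γ] {w' r : ℝ} (h : w' < r) :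
    kern Γ w' (shiftd Uset r) = 0 := by
  unfold kern deltaPlus
  split_ifs with h1
  · rw [Measure.dirac_prod,
      Measure.map_apply measurable_prodMk_left (measurableSet_shiftd_Uset r)]
    have he : Prod.mk w' ⁻¹' shiftd Uset r = ∅ := by
      ext p
      simp only [shiftd, shift, Q, mem_preimage, mem_setOf_eq, mem_empty_iff_false, iff_false]
      rintro ⟨_, h0, _⟩; linarith
    rw [he]; simp
  · simp

lemma ae_ne_real (c : ℝ) : ∀ᵐ s : ℝ, s ≠ c := by
  rw [ae_iff]
  simp

/- ===== end auxiliary lemmas ===== -/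

/-- Fluid nonabandoning queue-length formula: with
`U = {(a,p) ∈ [0,∞)² : a < p}`, for each `k`, if `0 ≤ t < w(0)` then
`ζ_k(t)(U) = ϑ_k(U_t) + λ_k ∫_0^t G_k(w(v)) dv`, and if `t ≥ w(0)` then
`ζ_k(t)(U) = λ_k ∫_{τ(t)}^t G_k(w(v)) dv`. -/
theorem fluid_nonabandoning_queue_length {K : ℕ} (D : Data K)
    (ϑ : Fin K → MeasureTheory.Measure (ℝ × ℝ)) (hϑ : MemI D ϑ)
    (ζ : ℝ → Fin K → MeasureTheory.Measure (ℝ × ℝ)) (hζ : IsFluidSol D ϑ ζ)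
    (w : ℝ → ℝ) (hw : IsWorkloadSol D w) (hw0 : w 0 = wMeas ϑ) :
    ∀ k,
      (∀ t : ℝ, 0 ≤ t → t < w 0 →
        ζ t k {p : ℝ × ℝ | 0 ≤ p.1 ∧ p.1 < p.2} =
          ϑ k (shiftd {p : ℝ × ℝ | 0 ≤ p.1 ∧ p.1 < p.2} t) +
            ENNReal.ofReal (D.lam k * ∫ v in (0:ℝ)..t, Gk (D.Γ k) (w v))) ∧
      (∀ t : ℝ, w 0 ≤ t →
        ζ t k {p : ℝ × ℝ | 0 ≤ p.1 ∧ p.1 < p.2} =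
          ENNReal.ofReal (D.lam k * ∫ v in (tauF w t)..t, Gk (D.Γ k) (w v))) := by
  obtain ⟨w', hw'sol, hw'0, hfin, hinit, hB⟩ := hζ
  have hweq : ∀ t, 0 ≤ t → w t = w' t :=
    workload_unique D hw hw'sol (by rw [hw0, hw'0])
  have hUQ : Uset ⊆ Q := fun p hp => ⟨hp.1, hp.1.trans hp.2.le⟩
  intro k
  constructor
  · intro t ht htw
    obtain ⟨hInt, hForm⟩ := hB k Uset hUQ measurableSet_Uset t ht
    rw [hForm]
    have hIeq : (∫ s in (0:ℝ)..t, kern (D.Γ k) (w' s) (shiftd Uset (t - s)))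
        = ∫ v in (0:ℝ)..t, Gk (D.Γ k) (w v) := by
      apply intervalIntegral.integral_congr
      intro s hs
      rw [uIcc_of_le ht] at hs
      have hmono := wadd_mono D hw le_rfl hs.1
      show kern (D.Γ k) (w' s) (shiftd Uset (t - s)) = Gk (D.Γ k) (w s)
      rw [← hweq s hs.1]
      exact kern_U_eq (D.Γ k) (by linarith [hs.2]) (by linarith [hs.2])
    rw [hIeq]
  · intro t htw
    have hw00 : 0 ≤ w 0 := hw.1 0 le_rfl
    have ht : 0 ≤ t := hw00.trans htw
    obtain ⟨hInt, hForm⟩ := hB k Uset hUQ measurableSet_Uset t ht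
    rw [hForm]
    have hθ : ϑ k (shiftd Uset t) = 0 := by
      have hsub : shiftd Uset t ⊆ Ici t ×ˢ Ici (0:ℝ) := by
        intro y hy
        obtain ⟨⟨hy1, hy2⟩, hzt, hlt⟩ := hy
        dsimp only at hzt
        exact ⟨by simp only [mem_Ici]; linarith, hy2⟩
      refine measure_mono_null hsub ?_
      have hline : ϑ k (({t} : Set ℝ) ×ˢ Ici (0:ℝ)) = 0 := by
        have hx : ((t, 0) : ℝ × ℝ) ∈ Q := ⟨ht, le_rfl⟩
        have hsum := hϑ.2.2.1 (t, 0) hx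
        have hk0 : ϑ k (shift Cset (t, 0)) = 0 :=
          (Finset.sum_eq_zero_iff.mp hsum) k (Finset.mem_univ k)
        refine measure_mono_null ?_ hk0
        rintro ⟨y1, y2⟩ ⟨hy1, hy2⟩
        simp only [mem_singleton_iff] at hy1
        subst hy1
        refine ⟨⟨ht, hy2⟩, Or.inr ⟨by ring, by simpa using hy2⟩⟩
      have hIoi : ϑ k (Ioi t ×ˢ Ici (0:ℝ)) = 0 := by
        have key : ∀ x : ℝ, t < x → ϑ k (Ici x ×ˢ Ici (0:ℝ)) = 0 := by
          intro x hx
          by_contra hne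
          have hpos : 0 < ∑ j, ϑ j (Ici x ×ˢ Ici (0:ℝ)) := by
            refine lt_of_lt_of_le (pos_iff_ne_zero.mpr hne) ?_
            exact Finset.single_le_sum (f := fun j => ϑ j (Ici x ×ˢ Ici (0:ℝ)))
              (fun j _ => zero_le) (Finset.mem_univ k)
          have hmem : x ∈ {x : ℝ | 0 ≤ x ∧ 0 < ∑ j, ϑ j (Ici x ×ˢ Ici (0:ℝ))} :=
            ⟨ht.trans hx.le, hpos⟩
          have hle : x ≤ wMeas ϑ := le_csSup hϑ.2.2.2.1 hmem
          rw [← hw0] at hle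
          linarith
        have hcover : Ioi t ×ˢ Ici (0:ℝ) ⊆ ⋃ n : ℕ, Ici (t + 1/(n+1)) ×ˢ Ici (0:ℝ) := by
          rintro ⟨y1, y2⟩ ⟨hy1, hy2⟩
          simp only [mem_Ioi] at hy1
          obtain ⟨n, hn⟩ := exists_nat_one_div_lt (sub_pos.mpr hy1)
          exact mem_iUnion.mpr ⟨n, ⟨by simp only [mem_Ici]; linarith, hy2⟩⟩
        refine measure_mono_null hcover (measure_iUnion_null fun n => key _ ?_)
        have hq : (0:ℝ) < 1/((n:ℝ)+1) := by positivity
        linarith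
      have hsplit : (Ici t ×ˢ Ici (0:ℝ) : Set (ℝ × ℝ))
          ⊆ (({t} : Set ℝ) ×ˢ Ici (0:ℝ)) ∪ (Ioi t ×ˢ Ici (0:ℝ)) := by
        rintro ⟨y1, y2⟩ ⟨hy1, hy2⟩
        simp only [mem_Ici] at hy1
        rcases eq_or_lt_of_le hy1 with he | hl
        · exact Or.inl ⟨he.symm, hy2⟩
        · exact Or.inr ⟨hl, hy2⟩
      exact measure_mono_null hsplit (measure_union_null hline hIoi)
    rw [hθ, zero_add]
    set S : Set ℝ := {s : ℝ | 0 ≤ s ∧ s ≤ t ∧ t ≤ w s + s} with hSdef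
    have htS : t ∈ S := ⟨ht, le_rfl, by linarith [hw.1 t ht]⟩
    have hSne : S.Nonempty := ⟨t, htS⟩
    have hSbdd : BddBelow S := ⟨0, fun s hs => hs.1⟩
    have hτdef : tauF w t = sInf S := rfl
    have hτ0 : 0 ≤ tauF w t := by rw [hτdef]; exact le_csInf hSne (fun s hs => hs.1)
    have hτt : tauF w t ≤ t := by rw [hτdef]; exact csInf_le hSbdd htS
    have hint1 : IntervalIntegrable
        (fun s => kern (D.Γ k) (w' s) (shiftd Uset (t - s))) volume 0 (tauF w t) :=
      hInt.mono_set (by rw [uIcc_of_le hτ0, uIcc_of_le ht]; exact Icc_subset_Icc le_rfl hτt)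
    have hint2 : IntervalIntegrable
        (fun s => kern (D.Γ k) (w' s) (shiftd Uset (t - s))) volume (tauF w t) t :=
      hInt.mono_set (by rw [uIcc_of_le hτt, uIcc_of_le ht]; exact Icc_subset_Icc hτ0 le_rfl)
    have h1 : (∫ s in (0:ℝ)..(tauF w t), kern (D.Γ k) (w' s) (shiftd Uset (t - s))) = 0 := by
      have hz : (∫ s in (0:ℝ)..(tauF w t), kern (D.Γ k) (w' s) (shiftd Uset (t - s)))
          = ∫ s in (0:ℝ)..(tauF w t), (0:ℝ) := by
        apply intervalIntegral.integral_congr_ae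
        filter_upwards [ae_ne_real (tauF w t)] with s hsne hs
        rw [uIoc_of_le hτ0] at hs
        have hsτ : s < tauF w t := lt_of_le_of_ne hs.2 hsne
        have hnotS : s ∉ S := notMem_of_lt_csInf (hτdef ▸ hsτ) hSbdd
        have hslt : w s + s < t := by
          by_contra hge
          push_neg at hge
          exact hnotS ⟨hs.1.le, hsτ.le.trans hτt, hge⟩
        show kern (D.Γ k) (w' s) (shiftd Uset (t - s)) = 0
        rw [← hweq s hs.1.le]
        exact kern_U_zero (D.Γ k) (by linarith)
      rw [hz, intervalIntegral.integral_zero]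
    have h2 : (∫ s in (tauF w t)..t, kern (D.Γ k) (w' s) (shiftd Uset (t - s)))
        = ∫ v in (tauF w t)..t, Gk (D.Γ k) (w v) := by
      apply intervalIntegral.integral_congr_ae
      filter_upwards [ae_ne_real t] with s hsne hs
      rw [uIoc_of_le hτt] at hs
      have hst : s < t := lt_of_le_of_ne hs.2 hsne
      obtain ⟨s', hs'S, hs's⟩ := exists_lt_of_csInf_lt hSne (hτdef ▸ hs.1)
      have hmono := wadd_mono D hw hs'S.1 hs's.le
      have hws : t ≤ w s + s := le_trans hs'S.2.2 hmono
      show kern (D.Γ k) (w' s) (shiftd Uset (t - s)) = Gk (D.Γ k) (w s)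
      rw [← hweq s (hτ0.trans hs.1.le)]
      exact kern_U_eq (D.Γ k) (by linarith) (by linarith)
    have hIeq : (∫ s in (0:ℝ)..t, kern (D.Γ k) (w' s) (shiftd Uset (t - s)))
        = ∫ v in (tauF w t)..t, Gk (D.Γ k) (w v) := by
      rw [← intervalIntegral.integral_add_adjacent_intervals hint1 hint2, h1, h2, zero_add]
    rw [hIeq]

end OverloadedFIFO
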